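/- There exists a positive integer n with F_n = 0 and F_{n+1} = 1 if and only if both a and b lie in F_q (i.e., both are constant polynomials). -/

import Mathlib

open Polynomial

noncomputable def genFib {K : Type*} [Field K] (a b : K[X]) : ℕ → K[X]
  | 0 => 0
  | 1 => 1
  | n + 2 => a * genFib a b (n + 1) + b * genFib a b n

noncomputable def fibRank {K : Type*} [Field K] (a b M : K[X]) : ℕ :=
  sInf {n : ℕ | 0 < n ∧ M ∣ genFib a b n}

noncomputable def fibPeriod {K : Type*} [Field K] (a b M : K[X]) : ℕ :=
  sInf {n : ℕ | 0 < n ∧ M ∣ genFib a b n ∧ M ∣ (genFib a b (n + 1) - 1)}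

noncomputable def polyOrd {K : Type*} [Field K] (M g : K[X]) : ℕ :=
  orderOf (Ideal.Quotient.mk (Ideal.span {M}) g)

private def fibK {K : Type*} [Field K] (a b : K) : ℕ → K
  | 0 => 0
  | 1 => 1
  | n + 2 => a * fibK a b (n + 1) + b * fibK a b n

private lemma genFib_const {K : Type*} [Field K] (a b : K) :
    ∀ n, genFib (C a) (C b) n = C (fibK a b n)
  | 0 => by simp [genFib, fibK]
  | 1 => by simp [genFib, fibK]
  | n + 2 => by
      rw [genFib, fibK, genFib_const a b (n + 1), genFib_const a b n]
      simp [map_add, map_mul]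

private def stepE {K : Type*} [Field K] (a b : K) (hb : b ≠ 0) : K × K ≃ K × K where
  toFun p := (p.2, a * p.2 + b * p.1)
  invFun p := (b⁻¹ * (p.2 - a * p.1), p.1)
  left_inv p := by
    obtain ⟨x, y⟩ := p
    simp only [Prod.mk.injEq]
    refine ⟨by field_simp; ring, trivial⟩
  right_inv p := by
    obtain ⟨x, y⟩ := p
    simp only [Prod.mk.injEq]
    refine ⟨trivial, by field_simp; ring⟩

private lemma fibK_pair {K : Type*} [Field K] (a b : K) (hb : b ≠ 0) :
    ∀ n, (stepE a b hb)^[n] (0, 1) = (fibK a b n, fibK a b (n + 1))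
  | 0 => by simp [fibK]
  | n + 1 => by
      rw [Function.iterate_succ_apply', fibK_pair a b hb n]
      show (fibK a b (n + 1), a * fibK a b (n + 1) + b * fibK a b n) = _
      rw [show fibK a b (n + 2) = a * fibK a b (n + 1) + b * fibK a b n from rfl]

private lemma genFib_deg {K : Type*} [Field K] {a : K[X]} {cb : K} (hd : 0 < a.natDegree)
    (hcb : cb ≠ 0) :
    ∀ k : ℕ, (genFib a (C cb) (k + 1)).degree = ((k * a.natDegree : ℕ) : WithBot ℕ)
  | 0 => by simp [genFib]
  | 1 => by
      have ha : a ≠ 0 := fun h => by simp [h] at hd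
      have h2 : genFib a (C cb) 2 = a := by
        rw [genFib]; simp [genFib]
      rw [h2, degree_eq_natDegree ha]; simp
  | k + 2 => by
      have ha : a ≠ 0 := fun h => by simp [h] at hd
      have h1 := genFib_deg hd hcb (k + 1)
      have h2 := genFib_deg hd hcb k
      have hF2 : genFib a (C cb) (k + 2) ≠ 0 :=
        zero_le_degree_iff.mp (by rw [h1]; exact_mod_cast Nat.zero_le _)
      have hF1 : genFib a (C cb) (k + 1) ≠ 0 :=
        zero_le_degree_iff.mp (by rw [h2]; exact_mod_cast Nat.zero_le _)
      have e : genFib a (C cb) (k + 3) =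
          a * genFib a (C cb) (k + 2) + C cb * genFib a (C cb) (k + 1) := by
        rw [genFib]
      have hda : (a * genFib a (C cb) (k + 2)).degree = (((k + 2) * a.natDegree : ℕ) : WithBot ℕ) := by
        rw [degree_mul, h1, degree_eq_natDegree ha, ← Nat.cast_add]
        congr 1; ring
      have hlt : (C cb * genFib a (C cb) (k + 1)).degree <
          (a * genFib a (C cb) (k + 2)).degree := by
        rw [degree_mul, h2, degree_C hcb, zero_add, hda]
        exact_mod_cast (Nat.mul_lt_mul_right hd).mpr (by omega)
      rw [e, degree_add_eq_left_of_degree_lt hlt, hda]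

theorem stmt4 {K : Type*} [Field K] [Fintype K] (a b : K[X]) (hb : b ≠ 0) :
    (∃ n : ℕ, 0 < n ∧ genFib a b n = 0 ∧ genFib a b (n + 1) = 1) ↔
      (∃ c : K, a = C c) ∧ (∃ c : K, b = C c) := by
  constructor
  · rintro ⟨n, hn, h0, h1⟩
    obtain ⟨k, rfl⟩ : ∃ k, n = k + 1 := ⟨n - 1, by omega⟩
    -- b * genFib a b k = 1, so b is a unit hence constant
    have hrec : genFib a b (k + 2) = a * genFib a b (k + 1) + b * genFib a b k := by
      rw [genFib]
    rw [hrec, h0, mul_zero, zero_add] at h1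
    have hub : IsUnit b := IsUnit.of_mul_eq_one _ h1
    obtain ⟨cb, hcbu, hcb⟩ := Polynomial.isUnit_iff.mp hub
    have hcb0 : cb ≠ 0 := by
      rintro rfl
      exact hb (by simp [← hcb])
    refine ⟨?_, ⟨cb, hcb.symm⟩⟩
    by_contra hA
    have hd : 0 < a.natDegree := by
      rcases Nat.eq_zero_or_pos a.natDegree with h | h
      · obtain ⟨c, hc⟩ := Polynomial.natDegree_eq_zero.mp h
        exact absurd ⟨c, hc.symm⟩ hA
      · exact h
    have hF : genFib a (C cb) (k + 1) ≠ 0 :=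
      zero_le_degree_iff.mp (by rw [genFib_deg hd hcb0 k]; exact_mod_cast Nat.zero_le _)
    rw [hcb] at hF
    exact hF h0
  · rintro ⟨⟨ca, rfl⟩, ⟨cb, rfl⟩⟩
    have hcb : cb ≠ 0 := fun h => hb (by simp [h])
    -- pigeonhole on iterates of stepE
    obtain ⟨m, m', hne, heq⟩ :=
      Finite.exists_ne_map_eq_of_infinite (fun n : ℕ => (stepE ca cb hcb)^[n] (0, 1))
    wlog hlt : m < m' generalizing m m'
    · exact this m' m hne.symm heq.symm (by omega)
    have hinj : Function.Injective ((stepE ca cb hcb)^[m]) :=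
      Function.Injective.iterate (stepE ca cb hcb).injective m
    have key : (stepE ca cb hcb)^[m' - m] (0, 1) = (0, 1) := by
      apply hinj
      rw [← Function.iterate_add_apply]
      rw [show m + (m' - m) = m' from by omega]
      exact heq.symm
    rw [fibK_pair] at key
    have h0 : fibK ca cb (m' - m) = 0 := congrArg Prod.fst key
    have h1 : fibK ca cb (m' - m + 1) = 1 := congrArg Prod.snd key
    exact ⟨m' - m, by omega, by rw [genFib_const, h0, map_zero],
      by rw [genFib_const, h1, map_one]⟩
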